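/- Let F be a continuous mapping from a neighborhood of x̄ in a Banach space X into a Banach space Y. Suppose there exist a bounded linear operator A : X → Y and positive numbers δ, γ, ε such that C(A) > δ + γ and ‖F(x') − F(x) − A(x' − x)‖ < δ‖x' − x‖ whenever x, x' belong to the open ε-ball around x̄. Then B(F(x̄), γt) ⊆ F(B(x̄, t)) for all t ∈ (0, ε). -/

import Mathlib

open ENNReal

/-- The Banach constant of a bounded linear operator:
`C(A) = sup {r ≥ 0 : r·B_Y ⊆ A(B_X)}`. -/
noncomputable def BanachConstant {X Y : Type*} [NormedAddCommGroup X] [NormedSpace ℝ X]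
    [NormedAddCommGroup Y] [NormedSpace ℝ Y] (A : X →L[ℝ] Y) : ℝ≥0∞ :=
  sSup {r : ℝ≥0∞ | ∀ y : Y, (‖y‖₊ : ℝ≥0∞) ≤ r → ∃ x : X, ‖x‖ ≤ 1 ∧ A x = y}

/-- Graves' theorem: if `F` is continuous near `xb`, `A` is a bounded linear operator
with `C(A) > δ + γ`, and `‖F x' - F x - A (x' - x)‖ < δ ‖x' - x‖` on the open
`ε`-ball around `xb`, then `B(F xb, γ t) ⊆ F (B(xb, t))` for all `t ∈ (0, ε)`. -/
theorem graves_theorem {X Y : Type*} [NormedAddCommGroup X] [NormedSpace ℝ X] [CompleteSpace X]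
    [NormedAddCommGroup Y] [NormedSpace ℝ Y] [CompleteSpace Y]
    (F : X → Y) (xb : X) (A : X →L[ℝ] Y) (δ γ ε : ℝ)
    (hδ : 0 < δ) (hγ : 0 < γ) (hε : 0 < ε)
    (hF : ContinuousOn F (Metric.ball xb ε))
    (hC : ENNReal.ofReal (δ + γ) < BanachConstant A)
    (happrox : ∀ x ∈ Metric.ball xb ε, ∀ x' ∈ Metric.ball xb ε, x ≠ x' →
      ‖F x' - F x - A (x' - x)‖ < δ * ‖x' - x‖) :
    ∀ t ∈ Set.Ioo (0:ℝ) ε, ∀ y ∈ Metric.closedBall (F xb) (γ * t),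
      ∃ x ∈ Metric.closedBall xb t, F x = y := by
  intro t ht y hy
  obtain ⟨ht0, htε⟩ := ht
  set c : ℝ := δ + γ with hc
  have hc0 : 0 < c := by positivity
  -- non-strict approximation
  have happrox' : ∀ a ∈ Metric.ball xb ε, ∀ b ∈ Metric.ball xb ε,
      ‖F b - F a - A (b - a)‖ ≤ δ * ‖b - a‖ := by
    intro a ha b hb
    rcases eq_or_ne a b with rfl | h
    · simp
    · exact (happrox a ha b hb h).le
  -- surjectivity with bound
  obtain ⟨r, hrS, hrgt⟩ := lt_sSup_iff.1 hC
  have hsurj : ∀ z : Y, ‖z‖ ≤ c → ∃ x : X, ‖x‖ ≤ 1 ∧ A x = z := by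
    intro z hz
    refine hrS z (le_trans ?_ hrgt.le)
    rw [← ENNReal.ofReal_coe_nnreal, coe_nnnorm]
    exact ENNReal.ofReal_le_ofReal hz
  have hsurj' : ∀ z : Y, ∃ u : X, c * ‖u‖ ≤ ‖z‖ ∧ A u = z := by
    intro z
    rcases eq_or_ne z 0 with rfl | hz
    · exact ⟨0, by simp, by simp⟩
    · have hzn : 0 < ‖z‖ := norm_pos_iff.mpr hz
      obtain ⟨x, hx1, hAx⟩ := hsurj ((c / ‖z‖) • z) (by
        rw [norm_smul, Real.norm_eq_abs, abs_of_pos (by positivity),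
          div_mul_cancel₀ _ hzn.ne'])
      refine ⟨(‖z‖ / c) • x, ?_, ?_⟩
      · rw [norm_smul, Real.norm_eq_abs, abs_of_pos (by positivity)]
        have h1 : c * (‖z‖ / c * ‖x‖) = ‖z‖ * ‖x‖ := by
          field_simp
        rw [h1]
        exact mul_le_of_le_one_right hzn.le hx1
      · rw [map_smul, hAx, smul_smul, div_mul_div_comm,
          mul_comm (‖z‖) c, div_self (by positivity), one_smul]
  -- iteration
  set u : X → X := fun z => Classical.choose (hsurj' (y - F z)) with hu
  have hu1 : ∀ z, c * ‖u z‖ ≤ ‖y - F z‖ := fun z => (Classical.choose_spec (hsurj' (y - F z))).1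
  have hu2 : ∀ z, A (u z) = y - F z := fun z => (Classical.choose_spec (hsurj' (y - F z))).2
  set x : ℕ → X := fun n => Nat.rec xb (fun _ z => z + u z) n with hx
  have hx0 : x 0 = xb := rfl
  have hxS : ∀ n, x (n + 1) = x n + u (x n) := fun n => rfl
  set q : ℝ := δ / c with hq
  have hq0 : 0 < q := by positivity
  have hq1 : q < 1 := by
    rw [hq, div_lt_one hc0]
    linarith
  have hyb : ‖y - F xb‖ ≤ γ * t := by
    rw [Metric.mem_closedBall, dist_eq_norm] at hy
    exact hy
  -- main invariant
  have key : ∀ n : ℕ, ‖x n - xb‖ ≤ t * (1 - q ^ n) ∧ ‖y - F (x n)‖ ≤ q ^ n * (γ * t) := by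
    intro n
    induction n with
    | zero => simpa [hx0] using hyb
    | succ n ih =>
      obtain ⟨ih1, ih2⟩ := ih
      have hqn1 : q ^ n ≤ 1 := pow_le_one₀ hq0.le hq1.le
      have hmem : x n ∈ Metric.ball xb ε := by
        rw [Metric.mem_ball, dist_eq_norm]
        calc ‖x n - xb‖ ≤ t * (1 - q ^ n) := ih1
          _ ≤ t := by nlinarith [pow_pos hq0 n]
          _ < ε := htε
      have hun : ‖u (x n)‖ ≤ q ^ n * (γ * t) / c :=
        (le_div_iff₀' hc0).2 ((hu1 (x n)).trans ih2)
      have h1 : ‖x (n + 1) - xb‖ ≤ t * (1 - q ^ (n + 1)) := by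
        rw [hxS]
        calc ‖x n + u (x n) - xb‖ = ‖(x n - xb) + u (x n)‖ := by rw [add_sub_right_comm]
          _ ≤ ‖x n - xb‖ + ‖u (x n)‖ := norm_add_le _ _
          _ ≤ t * (1 - q ^ n) + q ^ n * (γ * t) / c := add_le_add ih1 hun
          _ = t * (1 - q ^ (n + 1)) := by
              rw [pow_succ, hq, hc]
              field_simp
              ring
      refine ⟨h1, ?_⟩
      have hmem' : x (n + 1) ∈ Metric.ball xb ε := by
        rw [Metric.mem_ball, dist_eq_norm]
        calc ‖x (n + 1) - xb‖ ≤ t * (1 - q ^ (n + 1)) := h1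
          _ ≤ t := by nlinarith [pow_pos hq0 (n + 1)]
          _ < ε := htε
      have hdiff : x (n + 1) - x n = u (x n) := by rw [hxS]; abel
      have h2 : ‖y - F (x (n + 1))‖ = ‖F (x (n + 1)) - F (x n) - A (x (n + 1) - x n)‖ := by
        rw [hdiff, hu2]
        rw [show F (x (n + 1)) - F (x n) - (y - F (x n)) = -(y - F (x (n + 1))) by abel]
        rw [norm_neg]
      calc ‖y - F (x (n + 1))‖ = ‖F (x (n + 1)) - F (x n) - A (x (n + 1) - x n)‖ := h2
        _ ≤ δ * ‖x (n + 1) - x n‖ := happrox' _ hmem _ hmem'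
        _ ≤ δ * (q ^ n * (γ * t) / c) := by
            rw [hdiff]
            exact mul_le_mul_of_nonneg_left hun hδ.le
        _ = q ^ (n + 1) * (γ * t) := by
            rw [pow_succ, hq]
            field_simp
  -- Cauchy sequence
  have hcauchy : CauchySeq x := by
    apply cauchySeq_of_le_geometric q (γ * t / c) hq1
    intro n
    rw [dist_eq_norm]
    have hdiff : x n - x (n + 1) = -(u (x n)) := by rw [hxS]; abel
    rw [hdiff, norm_neg]
    have : c * ‖u (x n)‖ ≤ q ^ n * (γ * t) := (hu1 (x n)).trans (key n).2
    rw [div_mul_eq_mul_div, le_div_iff₀ hc0]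
    calc ‖u (x n)‖ * c = c * ‖u (x n)‖ := by ring
      _ ≤ q ^ n * (γ * t) := this
      _ = γ * t * q ^ n := by ring
  obtain ⟨l, hl⟩ := cauchySeq_tendsto_of_complete hcauchy
  have hlt : l ∈ Metric.closedBall xb t := by
    refine Metric.isClosed_closedBall.mem_of_tendsto hl (Filter.Eventually.of_forall fun n => ?_)
    rw [Metric.mem_closedBall, dist_eq_norm]
    have hqn1 : 0 < q ^ n := pow_pos hq0 n
    calc ‖x n - xb‖ ≤ t * (1 - q ^ n) := (key n).1
      _ ≤ t := by nlinarith
  have hlball : l ∈ Metric.ball xb ε := by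
    rw [Metric.mem_ball]
    calc dist l xb ≤ t := Metric.mem_closedBall.1 hlt
      _ < ε := htε
  have hcont : ContinuousAt F l := hF.continuousAt (Metric.isOpen_ball.mem_nhds hlball)
  have hFlim : Filter.Tendsto (fun n => F (x n)) Filter.atTop (nhds (F l)) :=
    (hcont.tendsto).comp hl
  have hFy : Filter.Tendsto (fun n => F (x n)) Filter.atTop (nhds y) := by
    rw [tendsto_iff_dist_tendsto_zero]
    have hgeo : Filter.Tendsto (fun n : ℕ => q ^ n * (γ * t)) Filter.atTop (nhds 0) := by
      have := (tendsto_pow_atTop_nhds_zero_of_lt_one hq0.le hq1).mul_const (γ * t)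
      simpa using this
    refine squeeze_zero (fun n => dist_nonneg) (fun n => ?_) hgeo
    rw [dist_eq_norm, ← norm_neg]
    have : -(F (x n) - y) = y - F (x n) := by abel
    rw [this]
    exact (key n).2
  exact ⟨l, hlt, tendsto_nhds_unique hFlim hFy⟩
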